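/- Under the hypotheses of the tug-of-war recursion with π(i) ≥ π₁* > 0 for all i ≥ 0 and π(i) ≥ π̃ > 1/2 for i ≥ N', the value at the even state satisfies V(0)/v ≥ α where α := [1 + Σ_{j=0}^{N'−1} ((1−π₁*)/π₁*)^{j+1} + (r/(1−r))·((1−π₁*)/π₁*)^{N'}]^{−1} > 0 with r := (1−π̃)/π̃. Consequently expected total effort is at most (1 − 2α)v, uniformly over all margins N ≥ 1 and prizes v > 0. -/

import Mathlib

/-- with π(i) ≥ π₁* > 0 everywhere and π(i) ≥ π̃ > 1/2 for i ≥ N',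
V(0)/v ≥ α with α = [1 + Σ_{j=0}^{N'−1}((1−π₁*)/π₁*)^{j+1} + (r/(1−r))·((1−π₁*)/π₁*)^{N'}]⁻¹
where r = (1−π̃)/π̃; hence expected total effort v − 2V(0) ≤ (1 − 2α)v,
uniformly over all margins N ≥ 1 and prizes v > 0. -/
theorem stmt_13 (N : ℤ) (N' : ℕ) (v : ℝ) (V π : ℤ → ℝ) (π1 pt α : ℝ)
    (hN : 1 ≤ N) (hv : 0 < v)
    (hrange : ∀ i, -N ≤ i → i ≤ N → V i ∈ Set.Icc (0:ℝ) v)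
    (hVN : V N = v) (hVmN : V (-N) = 0)
    (hπ : ∀ i, -N+1 ≤ i → i ≤ N-1 → π i ∈ Set.Ioo (0:ℝ) 1)
    (hrec : ∀ i, -N+1 ≤ i → i ≤ N-1 →
      V i = V (i-1) + π i * (V (i+1) - V (i-1)))
    (hπ1 : π1 ∈ Set.Ioo (0:ℝ) 1)
    (hlow : ∀ i, -N+1 ≤ i → i ≤ N-1 → π1 ≤ π i)
    (hpt : 1/2 < pt) (hpt1 : pt < 1)
    (hbig : ∀ i, (N':ℤ) ≤ i → i ≤ N-1 → pt ≤ π i)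
    (hα : α = (1 + (∑ j ∈ Finset.range N', ((1 - π1) / π1) ^ (j+1)) +
      (((1 - pt) / pt) / (1 - (1 - pt) / pt)) * ((1 - π1) / π1) ^ N')⁻¹) :
    0 < α ∧ α * v ≤ V 0 ∧ v - 2 * V 0 ≤ (1 - 2 * α) * v := by
  obtain ⟨hπ1a, hπ1b⟩ := hπ1
  have hpt0 : (0:ℝ) < pt := by linarith
  set ρ1 := (1 - π1) / π1 with hρ1def
  set r := (1 - pt) / pt with hrdef
  have hρ1nn : 0 ≤ ρ1 := div_nonneg (by linarith) hπ1a.le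
  have hrnn : 0 ≤ r := div_nonneg (by linarith) hpt0.le
  have hr1 : r < 1 := by rw [hrdef, div_lt_one hpt0]; linarith
  have h1r : (0:ℝ) < 1 - r := by linarith
  set c : ℕ → ℝ := fun k => if k < N' then ρ1 else r with hcdef
  have hcnn : ∀ k, 0 ≤ c k := by
    intro k; by_cases h : k < N' <;> simp [hcdef, h] <;> assumption
  set B : ℕ → ℝ := fun j => ∏ k ∈ Finset.range (j+1), c k with hBdef
  have hBnn : ∀ j, 0 ≤ B j := fun j => Finset.prod_nonneg (fun k _ => hcnn k)
  -- ratio identity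
  have hratio : ∀ i : ℤ, -N+1 ≤ i → i ≤ N-1 →
      V (i+1) - V i = ((1 - π i)/π i) * (V i - V (i-1)) := by
    intro i h1 h2
    have h := hrec i h1 h2
    have hπi := (hπ i h1 h2).1
    field_simp
    linear_combination -h
  -- nonnegativity of increments
  have key : ∀ n : ℕ, (-N + (n:ℤ) ≤ N - 1) → 0 ≤ V (-N + (n:ℤ) + 1) - V (-N + (n:ℤ)) := by
    intro n
    induction n with
    | zero =>
      intro _
      have h1 := (hrange (-N+1) (by omega) (by omega)).1
      simpa [hVmN] using h1
    | succ n ih =>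
      intro hle
      have hle' : -N + (n:ℤ) ≤ N - 1 := by push_cast at hle ⊢; omega
      have ihn := ih hle'
      have h := hratio (-N + (n:ℤ) + 1) (by omega) (by push_cast at hle; omega)
      have harg : -N + (n:ℤ) + 1 - 1 = -N + (n:ℤ) := by ring
      rw [harg] at h
      have hπi := hπ (-N + (n:ℤ) + 1) (by omega) (by push_cast at hle; omega)
      have hρnn : 0 ≤ (1 - π (-N + (n:ℤ) + 1)) / π (-N + (n:ℤ) + 1) :=
        div_nonneg (by linarith [hπi.2]) hπi.1.le
      have : (-N + ((n:ℕ)+1:ℤ)) = -N + (n:ℤ) + 1 := by push_cast; ring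
      rw [show ((n+1 : ℕ):ℤ) = (n:ℤ)+1 by push_cast; ring]
      calc (0:ℝ) ≤ ((1 - π (-N + (n:ℤ) + 1)) / π (-N + (n:ℤ) + 1)) *
            (V (-N + (n:ℤ) + 1) - V (-N + (n:ℤ))) := mul_nonneg hρnn ihn
        _ = V (-N + ((n:ℤ)+1) + 1) - V (-N + ((n:ℤ)+1)) := by rw [← h]; ring_nf
  have hg : ∀ i : ℤ, -N ≤ i → i ≤ N - 1 → 0 ≤ V (i+1) - V i := by
    intro i h1 h2
    have h3 : ((i + N).toNat : ℤ) = i + N := Int.toNat_of_nonneg (by omega)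
    have := key (i+N).toNat (by rw [h3]; omega)
    rw [h3] at this
    convert this using 3 <;> ring
  -- ratio upper bounds
  have hρc : ∀ n : ℕ, ((n:ℤ) ≤ N - 1) → (1 - π (n:ℤ)) / π (n:ℤ) ≤ c n := by
    intro n hn
    have h1 : -N + 1 ≤ (n:ℤ) := by omega
    have hπn := hπ (n:ℤ) h1 hn
    by_cases h : n < N'
    · have hl := hlow (n:ℤ) h1 hn
      simp only [hcdef, if_pos h, hρ1def]
      rw [div_le_div_iff₀ hπn.1 hπ1a]
      nlinarith
    · have hN'le : (N':ℤ) ≤ (n:ℤ) := by omega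
      have hl := hbig (n:ℤ) hN'le hn
      simp only [hcdef, if_neg h, hrdef]
      rw [div_le_div_iff₀ hπn.1 hpt0]
      nlinarith
  have hgm1 : 0 ≤ V 0 - V (-1) := by
    have := hg (-1) (by omega) (by omega)
    norm_num at this
    linarith
  -- claim A
  have hA : ∀ n : ℕ, ((n:ℤ) ≤ N - 1) → V ((n:ℤ)+1) - V (n:ℤ) ≤ (V 0 - V (-1)) * B n := by
    intro n
    induction n with
    | zero =>
      intro hn
      have h := hratio 0 (by omega) (by omega)
      norm_num at h
      have hB0 : B 0 = c 0 := by simp [hBdef]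
      have := mul_le_mul_of_nonneg_right (hρc 0 (by exact_mod_cast hn)) hgm1
      push_cast
      rw [hB0]
      calc V (0+1) - V 0 = ((1 - π 0)/π 0) * (V 0 - V (-1)) := by
            rw [show (0:ℤ)+1 = 1 by ring]; exact h
        _ ≤ c 0 * (V 0 - V (-1)) := by exact_mod_cast this
        _ = (V 0 - V (-1)) * c 0 := by ring
    | succ n ih =>
      intro hn
      have hn' : (n:ℤ) ≤ N - 1 := by push_cast at hn ⊢; omega
      have ih' := ih hn'
      have h := hratio ((n:ℤ)+1) (by omega) (by push_cast at hn; omega)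
      have harg : (n:ℤ) + 1 - 1 = (n:ℤ) := by ring
      rw [harg] at h
      have hgn : 0 ≤ V ((n:ℤ)+1) - V (n:ℤ) := hg (n:ℤ) (by omega) hn'
      have hρ := hρc (n+1) (by push_cast at hn ⊢; omega)
      push_cast at hρ
      have hBs : B (n+1) = B n * c (n+1) := by
        simp only [hBdef]
        exact Finset.prod_range_succ c (n+1)
      push_cast
      calc V ((n:ℤ)+1+1) - V ((n:ℤ)+1)
          = ((1 - π ((n:ℤ)+1))/π ((n:ℤ)+1)) * (V ((n:ℤ)+1) - V (n:ℤ)) := h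
        _ ≤ c (n+1) * ((V 0 - V (-1)) * B n) :=
            mul_le_mul hρ ih' hgn (hcnn (n+1))
        _ = (V 0 - V (-1)) * B (n+1) := by rw [hBs]; ring
  -- product values
  have hBval1 : ∀ j, j < N' → B j = ρ1 ^ (j+1) := by
    intro j hj
    simp only [hBdef]
    calc ∏ k ∈ Finset.range (j+1), c k = ∏ _k ∈ Finset.range (j+1), ρ1 :=
          Finset.prod_congr rfl (fun k hk => by
            have : k < N' := by have := Finset.mem_range.mp hk; omega
            simp [hcdef, this])
      _ = ρ1 ^ (j+1) := by rw [Finset.prod_const, Finset.card_range]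
  have hBval2 : ∀ j, N' ≤ j → B j = ρ1 ^ N' * r ^ (j+1-N') := by
    intro j hj
    simp only [hBdef]
    rw [Finset.range_eq_Ico, ← Finset.prod_Ico_consecutive c (Nat.zero_le N') (by omega : N' ≤ j+1)]
    congr 1
    · rw [← Finset.range_eq_Ico]
      calc ∏ k ∈ Finset.range N', c k = ∏ _k ∈ Finset.range N', ρ1 :=
            Finset.prod_congr rfl (fun k hk => by
              have : k < N' := Finset.mem_range.mp hk
              simp [hcdef, this])
        _ = ρ1 ^ N' := by rw [Finset.prod_const, Finset.card_range]
    · calc ∏ k ∈ Finset.Ico N' (j+1), c k = ∏ _k ∈ Finset.Ico N' (j+1), r :=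
            Finset.prod_congr rfl (fun k hk => by
              have : ¬ (k < N') := by have := (Finset.mem_Ico.mp hk).1; omega
              simp [hcdef, this])
        _ = r ^ (j+1-N') := by rw [Finset.prod_const, Nat.card_Ico]
  -- geometric sum bound
  have hgeom : ∀ t : ℕ, (∑ m ∈ Finset.range t, r^(m+1)) ≤ r / (1-r) := by
    intro t
    have h1 : (∑ m ∈ Finset.range t, r^(m+1)) = r * ∑ m ∈ Finset.range t, r^m := by
      rw [Finset.mul_sum]
      exact Finset.sum_congr rfl fun m _ => by ring
    have h2 : (∑ m ∈ Finset.range t, r^m) = (r^t - 1)/(r - 1) :=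
      geom_sum_eq (by linarith) t
    have h3 : (r^t - 1)/(r - 1) = (1 - r^t)/(1-r) := by
      rw [← neg_div_neg_eq]; ring_nf
    have h4 : (1 - r^t)/(1-r) ≤ 1/(1-r) := by
      gcongr
      nlinarith [pow_nonneg hrnn t]
    rw [h1, h2, h3]
    calc r * ((1 - r^t)/(1-r)) ≤ r * (1/(1-r)) := mul_le_mul_of_nonneg_left h4 hrnn
      _ = r/(1-r) := by ring
  set S : ℝ := (∑ j ∈ Finset.range N', ρ1 ^ (j+1)) + (r/(1-r)) * ρ1 ^ N' with hSdef
  have hSnn : 0 ≤ S := by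
    apply add_nonneg
    · exact Finset.sum_nonneg fun j _ => pow_nonneg hρ1nn _
    · exact mul_nonneg (div_nonneg hrnn h1r.le) (pow_nonneg hρ1nn _)
  -- sum bound
  have hT : ∀ M : ℕ, (∑ j ∈ Finset.range M, B j) ≤ S := by
    intro M
    by_cases hM : M ≤ N'
    · calc (∑ j ∈ Finset.range M, B j) = ∑ j ∈ Finset.range M, ρ1^(j+1) :=
            Finset.sum_congr rfl fun j hj => hBval1 j (by have := Finset.mem_range.mp hj; omega)
        _ ≤ ∑ j ∈ Finset.range N', ρ1^(j+1) :=
            Finset.sum_le_sum_of_subset_of_nonneg (Finset.range_subset_range.mpr hM)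
              (fun j _ _ => pow_nonneg hρ1nn _)
        _ ≤ S := by
            have : 0 ≤ (r/(1-r)) * ρ1 ^ N' :=
              mul_nonneg (div_nonneg hrnn h1r.le) (pow_nonneg hρ1nn _)
            rw [hSdef]; linarith
    · push_neg at hM
      rw [Finset.range_eq_Ico, ← Finset.sum_Ico_consecutive B (Nat.zero_le N') hM.le]
      have hfirst : (∑ j ∈ Finset.Ico 0 N', B j) = ∑ j ∈ Finset.range N', ρ1^(j+1) := by
        rw [← Finset.range_eq_Ico]
        exact Finset.sum_congr rfl fun j hj => hBval1 j (Finset.mem_range.mp hj)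
      have hsecond : (∑ j ∈ Finset.Ico N' M, B j) ≤ (r/(1-r)) * ρ1 ^ N' := by
        rw [Finset.sum_Ico_eq_sum_range]
        calc (∑ m ∈ Finset.range (M - N'), B (N' + m))
            = ∑ m ∈ Finset.range (M - N'), ρ1 ^ N' * r^(m+1) := by
              refine Finset.sum_congr rfl fun m _ => ?_
              rw [hBval2 (N'+m) (by omega)]
              congr 2
              omega
          _ = ρ1 ^ N' * ∑ m ∈ Finset.range (M - N'), r^(m+1) := by rw [Finset.mul_sum]
          _ ≤ ρ1 ^ N' * (r/(1-r)) :=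
              mul_le_mul_of_nonneg_left (hgeom _) (pow_nonneg hρ1nn _)
          _ = (r/(1-r)) * ρ1 ^ N' := by ring
      rw [hfirst, hSdef]
      linarith [hsecond]
  -- telescoping
  have htel : v - V 0 = ∑ j ∈ Finset.range N.toNat, (V ((j:ℤ)+1) - V (j:ℤ)) := by
    have h := Finset.sum_range_sub (f := fun n : ℕ => V (n:ℤ)) N.toNat
    have hcast : ((N.toNat : ℕ) : ℤ) = N := Int.toNat_of_nonneg (by omega)
    rw [show (∑ j ∈ Finset.range N.toNat, (V ((j:ℤ)+1) - V (j:ℤ)))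
        = ∑ j ∈ Finset.range N.toNat, (V (((j+1:ℕ)):ℤ) - V (j:ℤ)) from
      Finset.sum_congr rfl fun j _ => by push_cast; ring_nf]
    rw [h, hcast, hVN]
    norm_num
  have hV0 := hrange 0 (by omega) (by omega)
  have hVm1 := hrange (-1) (by omega) (by omega)
  have hmain : v - V 0 ≤ V 0 * S := by
    rw [htel]
    have hTnn : 0 ≤ ∑ j ∈ Finset.range N.toNat, B j :=
      Finset.sum_nonneg fun j _ => hBnn j
    calc (∑ j ∈ Finset.range N.toNat, (V ((j:ℤ)+1) - V (j:ℤ)))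
        ≤ ∑ j ∈ Finset.range N.toNat, (V 0 - V (-1)) * B j := by
          refine Finset.sum_le_sum fun j hj => hA j ?_
          have hj' := Finset.mem_range.mp hj
          omega
      _ = (V 0 - V (-1)) * ∑ j ∈ Finset.range N.toNat, B j := by rw [Finset.mul_sum]
      _ ≤ V 0 * S := by
          apply mul_le_mul (by linarith [hVm1.1]) (hT N.toNat) hTnn hV0.1
  have hαS : α = (1 + S)⁻¹ := by
    rw [hα, hSdef, ← add_assoc]
  have h1S : (0:ℝ) < 1 + S := by linarith
  have hαpos : 0 < α := by rw [hαS]; exact inv_pos.mpr h1S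
  have hαv : α * v ≤ V 0 := by
    have h5 : v ≤ V 0 * (1 + S) := by nlinarith
    have h6 : α * v ≤ α * (V 0 * (1 + S)) := mul_le_mul_of_nonneg_left h5 hαpos.le
    have h7 : α * (V 0 * (1 + S)) = V 0 := by
      rw [hαS]; field_simp
    linarith
  refine ⟨hαpos, hαv, ?_⟩
  nlinarith [hαv]
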